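/- Every forward flipped path with respect to the lowest floor F* is useful: if P is a path arc-disjoint from F* starting at a vertex v of F* and ending at a vertex w of F* with v before w on F*, whose interior avoids F*, then replacing the v,w-subpath of an extension of F* by P yields a simple s,t-path containing P. -/

import Mathlib

/-!
Directed graphs are modelled by an arc relation `A : V → V → Prop`.
A simple directed path is a `List V` that is `Chain' A`, has no repeated
vertices, and has prescribed first and last vertices.
-/

variable {V : Type*}

/-- `l` is a simple directed path from `s` to `t` in the digraph with arcs `A`. -/
def IsPathFrom (A : V → V → Prop) (s t : V) (l : List V) : Prop :=
  l.Chain' A ∧ l.Nodup ∧ l.head? = some s ∧ l.getLast? = some t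

/-- The arc `(u,v)` is useful w.r.t. `s,t`: some simple `s,t`-path contains it
(i.e. `u,v` appear consecutively on the path). -/
def ArcUseful (A : V → V → Prop) (s t u v : V) : Prop :=
  ∃ l : List V, IsPathFrom A s t l ∧ [u, v] <:+: l

/-- The path `P` is useful w.r.t. `s,t`: some simple `s,t`-path contains it
as a (consecutive) subpath. -/
def PathUseful (A : V → V → Prop) (s t : V) (P : List V) : Prop :=
  ∃ l : List V, IsPathFrom A s t l ∧ P <:+: l

theorem splice_lemma (A : V → V → Prop) (s t : V)
    (G P : List V) (v w : V) (i j : ℕ)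
    (hG : IsPathFrom A s t G) (hP : IsPathFrom A v w P)
    (hij : i < j) (hjlen : j < G.length)
    (hvi : G[i] = v) (hwj : G[j] = w)
    (hmeet : ∀ x ∈ P, x ∈ G → x = v ∨ x = w) :
    PathUseful A s t P := by
  obtain ⟨hGc, hGn, hGh, hGl⟩ := hG
  obtain ⟨hPc, hPn, hPh, hPl⟩ := hP
  have hilen : i < G.length := hij.trans hjlen
  have hPne : P ≠ [] := by rintro rfl; simp at hPh
  have hGne : G ≠ [] := by rintro rfl; simp at hilen
  have hPcons : P = v :: P.tail := by
    rcases P with _ | ⟨a, P'⟩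
    · exact absurd rfl hPne
    · simp only [List.head?_cons, Option.some.injEq] at hPh
      rw [hPh]; rfl
  have hdropi : G.drop i = v :: G.drop (i+1) := by
    rw [List.drop_eq_getElem_cons hilen, hvi]
  have hdropj : G.drop j = w :: G.drop (j+1) := by
    rw [List.drop_eq_getElem_cons hjlen, hwj]
  -- chain split at i
  have hGc' : List.Chain' A (G.take i ++ G.drop i) := by
    rw [List.take_append_drop]; exact hGc
  have hsplit := List.isChain_append.mp hGc'
  -- chain on drop j
  have hGcj : List.Chain' A (G.drop j) := by
    have : List.Chain' A (G.take j ++ G.drop j) := by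
      rw [List.take_append_drop]; exact hGc
    exact (List.isChain_append.mp this).2.1
  rw [hdropj] at hGcj
  replace hGcj := List.isChain_cons.mp hGcj
  -- membership facts
  have hvdrop : v ∈ G.drop i := by rw [hdropi]; exact List.mem_cons_self
  have hwdrop : w ∈ G.drop i := by
    obtain ⟨k, rfl⟩ : ∃ k, j = i + k := ⟨j - i, by omega⟩
    have h1 : k < (G.drop i).length := by rw [List.length_drop]; omega
    have h2 : (G.drop i)[k] = w := by rw [List.getElem_drop]; exact hwj
    rw [← h2]; exact List.getElem_mem h1
  refine ⟨G.take i ++ P ++ G.drop (j+1), ⟨?_, ?_, ?_, ?_⟩, G.take i, G.drop (j+1), rfl⟩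
  · -- Chain'
    rw [List.append_assoc]
    refine List.isChain_append.mpr ?_
    refine ⟨hsplit.1, ?_, ?_⟩
    · rw [List.isChain_append]
      refine ⟨hPc, hGcj.2, ?_⟩
      intro x hx y hy
      rw [hPl] at hx
      have hx' : x = w := by simpa using hx.symm
      rw [hx']
      exact hGcj.1 y hy
    · intro x hx y hy
      have h := hsplit.2.2 x hx
      rw [hdropi] at h
      rw [hPcons] at hy
      have hy' : y = v := by simpa using hy.symm
      rw [hy']
      exact h v rfl
  · -- Nodup
    rw [List.append_assoc, List.nodup_append]
    have htd : (G.take i).Disjoint (G.drop i) := List.disjoint_take_drop hGn le_rfl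
    have htd' : (G.take (j+1)).Disjoint (G.drop (j+1)) := List.disjoint_take_drop hGn le_rfl
    refine ⟨hGn.sublist (List.take_sublist _ _), ?_, ?_⟩
    · rw [List.nodup_append]
      refine ⟨hPn, hGn.sublist (List.drop_sublist _ _), ?_⟩
      intro x hxP y hxd hxy
      subst hxy
      have hxG : x ∈ G := List.mem_of_mem_drop hxd
      rcases hmeet x hxP hxG with rfl | rfl
      · exact htd' (List.mem_take_iff_getElem.mpr ⟨i, by omega, by simp [hvi]⟩) hxd
      · exact htd' (List.mem_take_iff_getElem.mpr ⟨j, by omega, by simp [hwj]⟩) hxd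
    · intro x hxt y hx hxy
      subst hxy
      rcases List.mem_append.mp hx with hxP | hxd
      · rcases hmeet x hxP (List.mem_of_mem_take hxt) with rfl | rfl
        · exact htd hxt hvdrop
        · exact htd hxt hwdrop
      · exact List.disjoint_take_drop hGn (by omega) hxt hxd
  · -- head?
    rcases Nat.eq_zero_or_pos i with rfl | hi
    · rw [show G.take 0 = [] from rfl, List.nil_append,
        List.head?_append_of_ne_nil _ hPne, hPh]
      rw [← hvi, ← hGh]
      rcases G with _ | ⟨g, G'⟩
      · exact absurd rfl hGne
      · rfl
    · have htne : G.take i ≠ [] := by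
        intro h
        have h2 := congrArg List.length h
        simp only [List.length_take, List.length_nil] at h2
        omega
      rw [List.append_assoc, List.head?_append_of_ne_nil _ htne, ← hGh]
      rw [← List.take_append_drop i G, List.head?_append_of_ne_nil _ htne,
        List.take_append_drop]
  · -- getLast?
    rcases eq_or_ne (G.drop (j+1)) [] with hdn | hdn
    · have hjlast : j + 1 = G.length := by
        have h2 := congrArg List.length hdn
        simp only [List.length_drop, List.length_nil] at h2
        omega
      have hdj : G.drop j = [w] := by rw [hdropj, hdn]
      have h3 : G.getLast? = some w := by
        conv_lhs => rw [← List.take_append_drop j G]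
        rw [List.getLast?_append_of_ne_nil _ (by simp [hdj] : G.drop j ≠ [])]
        simp [hdj]
      have hwt : w = t := by rw [h3] at hGl; exact Option.some.inj hGl
      rw [hdn, List.append_nil, List.getLast?_append_of_ne_nil _ hPne, hPl, hwt]
    · rw [List.getLast?_append_of_ne_nil _ hdn, ← hGl]
      conv_rhs => rw [← List.take_append_drop (j+1) G]
      rw [List.getLast?_append_of_ne_nil _ hdn]

/-- every forward flipped path w.r.t. the lowest floor `F*` is
useful.  Here `F*` is a simple path from `s` to an exit `t'` of the component
`C` (with `F* ⊆ C`), extendable by a `t',t`-path `T` meeting `C` only at `t'`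
to a simple `s,t`-path `F* ++ T.tail`.  If `P` is a path inside `C`, arc-disjoint
from `F*`, from a vertex `v` of `F*` to a vertex `w` of `F*` with `v` before `w`
on `F*` and interior avoiding `F*`, then replacing the `v,w`-portion of the
extension of `F*` by `P` yields a simple `s,t`-path containing `P`. -/
theorem forward_flipped_path_is_useful [DecidableEq V]
    (A : V → V → Prop) (s t t' : V) (C : Set V)
    (Fstar T : List V)
    (hF : IsPathFrom A s t' Fstar) (hFC : ∀ x ∈ Fstar, x ∈ C)
    (hT : IsPathFrom A t' t T) (hTC : ∀ x ∈ T, x ∈ C → x = t')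
    (hext : (Fstar ++ T.tail).Nodup)
    (P : List V) (v w : V)
    (hP : IsPathFrom A v w P) (hPC : ∀ x ∈ P, x ∈ C)
    (hv : v ∈ Fstar) (hw : w ∈ Fstar)
    (hord : Fstar.idxOf v < Fstar.idxOf w)
    (hint : ∀ x ∈ P, x ∈ Fstar → x = v ∨ x = w)
    (harc : ∀ a b : V, [a, b] <:+: P → ¬ [a, b] <:+: Fstar) :
    PathUseful A s t P := by
  obtain ⟨hFc, hFn, hFh, hFl⟩ := hF
  obtain ⟨hTc, hTn, hTh, hTl⟩ := hT
  have hFne : Fstar ≠ [] := by rintro rfl; simp at hFh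
  have hTne : T ≠ [] := by rintro rfl; simp at hTh
  have hTcons : T = t' :: T.tail := by
    rcases T with _ | ⟨a, T'⟩
    · exact absurd rfl hTne
    · simp only [List.head?_cons, Option.some.injEq] at hTh
      rw [hTh]; rfl
  have hTct : List.Chain' A (t' :: T.tail) := by rw [← hTcons]; exact hTc
  replace hTct := List.isChain_cons.mp hTct
  have ht'nt : t' ∉ T.tail := by
    have h := hTn
    rw [hTcons] at h
    exact (List.nodup_cons.mp h).1
  have hGc : List.Chain' A (Fstar ++ T.tail) := by
    refine List.isChain_append.mpr ?_
    refine ⟨hFc, hTct.2, ?_⟩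
    intro x hx y hy
    rw [hFl] at hx
    have hx' : x = t' := by simpa using hx.symm
    rw [hx']
    exact hTct.1 y hy
  have hGh : (Fstar ++ T.tail).head? = some s := by
    rw [List.head?_append_of_ne_nil _ hFne, hFh]
  have hGl : (Fstar ++ T.tail).getLast? = some t := by
    rcases eq_or_ne T.tail [] with h | h
    · have hT1 : T = [t'] := by rw [hTcons, h]
      rw [hT1] at hTl
      have ht : t' = t := by simpa using hTl
      rw [h, List.append_nil, hFl, ht]
    · rw [List.getLast?_append_of_ne_nil _ h, ← hTl]
      conv_rhs => rw [hTcons]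
      exact (List.getLast?_append_of_ne_nil [t'] h).symm
  have hi : Fstar.idxOf v < Fstar.length := List.idxOf_lt_length_iff.mpr hv
  have hj : Fstar.idxOf w < Fstar.length := List.idxOf_lt_length_iff.mpr hw
  have hjG : Fstar.idxOf w < (Fstar ++ T.tail).length := by
    rw [List.length_append]; omega
  refine splice_lemma A s t (Fstar ++ T.tail) P v w (Fstar.idxOf v) (Fstar.idxOf w)
    ⟨hGc, hext, hGh, hGl⟩ hP hord hjG ?_ ?_ ?_
  · rw [List.getElem_append_left hi]
    exact List.getElem_idxOf hi
  · rw [List.getElem_append_left hj]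
    exact List.getElem_idxOf hj
  · intro x hxP hxG
    rcases List.mem_append.mp hxG with h | h
    · exact hint x hxP h
    · exfalso
      have hx' : x = t' := hTC x (List.mem_of_mem_tail h) (hPC x hxP)
      rw [hx'] at h
      exact ht'nt h
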